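/- For every real number r with 0 ≤ r < 1/4, the series ∑_{n≥0} C_n r^n is summable, where C_n denotes the n-th Catalan number. -/
import Mathlib

lemma catalan_le_four_pow (n : ℕ) : (catalan n : ℝ) ≤ 4 ^ n := by
  have h1 : catalan n ≤ n.centralBinom := by
    calc catalan n ≤ (n + 1) * catalan n := Nat.le_mul_of_pos_left _ n.succ_pos
    _ = n.centralBinom := succ_mul_catalan_eq_centralBinom n
  have h2 : n.centralBinom ≤ 4 ^ n := by
    calc n.centralBinom = (2 * n).choose n := Nat.centralBinom_eq_two_mul_choose n
    _ ≤ (2 * n + 1).choose n := Nat.choose_le_choose n (by omega)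
    _ ≤ 4 ^ n := Nat.choose_middle_le_pow n
  exact_mod_cast h1.trans h2

/-- for `0 ≤ r < 1/4`, the Catalan generating series `∑ C_n r^n` is summable. -/
theorem catalan_series_summable (r : ℝ) (hr : 0 ≤ r) (hr4 : r < 1 / 4) :
    Summable (fun n : ℕ => (catalan n : ℝ) * r ^ n) := by
  have hgeom : Summable (fun n : ℕ => (4 * r) ^ n) :=
    summable_geometric_of_lt_one (by positivity) (by linarith)
  refine Summable.of_nonneg_of_le (fun n => by positivity) (fun n => ?_) hgeom
  rw [mul_pow]
  exact mul_le_mul_of_nonneg_right (by simpa using catalan_le_four_pow n) (pow_nonneg hr n)
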